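/- For an information frame 𝔸, a subset x ⊆ A satisfies finite consistency and completeness if and only if it satisfies: for every finite F ⊆ x there exist i ∈ x and a finite X ⊆ x with X ∈ Con_i and X ⊢_i F. -/
import Mathlib


/-- The data `(Con, Ent)` on token set `A` forms an information frame.
`Con i` is the set of finite sets of tokens consistent with `i`, and
`Ent i X a` means `X ⊢ᵢ a`.  The accessibility relation is `i R j ↔ {i} ∈ Con j`. -/
structure IsInfoFrame {A : Type*} [DecidableEq A]
    (Con : A → Set (Finset A)) (Ent : A → Finset A → A → Prop) : Prop where
  self_con : ∀ i : A, ({i} : Finset A) ∈ Con i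
  con_down : ∀ (i : A) (X Y : Finset A), Y ⊆ X → X ∈ Con i → Y ∈ Con i
  sound : ∀ (i : A) (X Y : Finset A), X ∈ Con i → (∀ b ∈ Y, Ent i X b) → Y ∈ Con i
  weaken : ∀ (i : A) (X Y : Finset A) (a : A),
    X ∈ Con i → Y ∈ Con i → X ⊆ Y → Ent i X a → Ent i Y a
  cut : ∀ (i : A) (X Y : Finset A) (a : A),
    X ∈ Con i → (∀ b ∈ Y, Ent i X b) → Ent i Y a → Ent i X a
  con_transfer : ∀ i j : A, ({i} : Finset A) ∈ Con j → Con i ⊆ Con j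
  ent_transfer : ∀ (i j : A) (X : Finset A) (a : A),
    ({i} : Finset A) ∈ Con j → X ∈ Con i → Ent i X a → Ent j X a
  interp : ∀ (i : A) (X Y : Finset A), X ∈ Con i → (∀ b ∈ Y, Ent i X b) →
    ∃ (e : A) (Z : Finset A), Z ∈ Con e ∧ (∀ b ∈ insert e Z, Ent i X b) ∧
      (∀ b ∈ Y, Ent e Z b)

/-- Finite consistency of a subset `x` of tokens. -/
def FinConsistent {A : Type*} (Con : A → Set (Finset A)) (x : Set A) : Prop :=
  ∀ F : Finset A, ↑F ⊆ x → ∃ i ∈ x, F ∈ Con i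

/-- Closure of `x` under entailment. -/
def EntClosed {A : Type*} (Con : A → Set (Finset A))
    (Ent : A → Finset A → A → Prop) (x : Set A) : Prop :=
  ∀ i ∈ x, ∀ X : Finset A, ↑X ⊆ x → X ∈ Con i → ∀ a : A, Ent i X a → a ∈ x

/-- Completeness of `x`. -/
def EntComplete {A : Type*} (Con : A → Set (Finset A))
    (Ent : A → Finset A → A → Prop) (x : Set A) : Prop :=
  ∀ a ∈ x, ∃ i ∈ x, ∃ X : Finset A, ↑X ⊆ x ∧ X ∈ Con i ∧ Ent i X a

/-- A (global) state of an information frame. -/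
def IsState {A : Type*} (Con : A → Set (Finset A))
    (Ent : A → Finset A → A → Prop) (x : Set A) : Prop :=
  FinConsistent Con x ∧ EntClosed Con Ent x ∧ EntComplete Con Ent x

theorem stmt9 {A : Type*} [DecidableEq A] (Con : A → Set (Finset A))
    (Ent : A → Finset A → A → Prop) (hF : IsInfoFrame Con Ent)
    (x : Set A) (hcl : EntClosed Con Ent x) :
    (FinConsistent Con x ∧ EntComplete Con Ent x) ↔
      (∀ F : Finset A, ↑F ⊆ x → ∃ i ∈ x, ∃ X : Finset A,
        ↑X ⊆ x ∧ X ∈ Con i ∧ ∀ b ∈ F, Ent i X b) := by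
  constructor
  · rintro ⟨hfc, hcomp⟩ F
    induction F using Finset.induction_on with
    | empty =>
      intro _
      obtain ⟨i, hi, hcon⟩ := hfc ∅ (by simp)
      exact ⟨i, hi, ∅, by simp, hcon, by simp⟩
    | @insert a F ha ih =>
      intro hFx
      have hax : a ∈ x := hFx (by simp)
      have hFx' : ↑F ⊆ x := by
        intro b hb
        exact hFx (by simp_all)
      obtain ⟨i1, hi1, X1, hX1x, hX1c, hX1e⟩ := ih hFx'
      obtain ⟨i2, hi2, X2, hX2x, hX2c, hX2e⟩ := hcomp a hax
      obtain ⟨j, hj, hjc⟩ := hfc (X1 ∪ X2 ∪ {i1, i2}) (by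
        push_cast
        refine Set.union_subset (Set.union_subset hX1x hX2x) ?_
        intro b hb
        simp only [Set.mem_insert_iff, Set.mem_singleton_iff] at hb
        rcases hb with rfl | rfl <;> assumption)
      have h1 : ({i1} : Finset A) ∈ Con j := hF.con_down j _ _
        (by intro b hb; simp_all) hjc
      have h2 : ({i2} : Finset A) ∈ Con j := hF.con_down j _ _
        (by intro b hb; simp_all) hjc
      have hX1j : X1 ∈ Con j := hF.con_down j _ _
        (by intro b hb; simp [hb]) hjc
      have hX2j : X2 ∈ Con j := hF.con_down j _ _
        (by intro b hb; simp [hb]) hjc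
      have hXj : X1 ∪ X2 ∈ Con j := hF.con_down j _ _
        (by intro b hb; simp only [Finset.mem_union] at hb ⊢; tauto) hjc
      refine ⟨j, hj, X1 ∪ X2, ?_, hXj, ?_⟩
      · push_cast; exact Set.union_subset hX1x hX2x
      · intro b hb
        rcases Finset.mem_insert.1 hb with rfl | hbF
        · exact hF.weaken j X2 (X1 ∪ X2) b hX2j hXj Finset.subset_union_right
            (hF.ent_transfer i2 j X2 b h2 hX2c hX2e)
        · exact hF.weaken j X1 (X1 ∪ X2) b hX1j hXj Finset.subset_union_left
            (hF.ent_transfer i1 j X1 b h1 hX1c (hX1e b hbF))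
  · intro h
    constructor
    · intro F hFx
      obtain ⟨i, hi, X, hXx, hXc, hXe⟩ := h F hFx
      exact ⟨i, hi, hF.sound i X F hXc hXe⟩
    · intro a ha
      obtain ⟨i, hi, X, hXx, hXc, hXe⟩ := h {a} (by simpa)
      exact ⟨i, hi, X, hXx, hXc, hXe a (by simp)⟩
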